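/- Let M and N be pointwise finite dimensional block decomposable ℝ^op×ℝ-indexed modules and fix direct sum decompositions M = M^o ⊕ M^co ⊕ M^oc ⊕ M^c and N = N^o ⊕ N^co ⊕ N^oc ⊕ N^c grouping the block summands by type. If (f,g) is an ε-interleaving pair between M and N, then for each type ⋆ ∈ {o, co, oc, c}, the pair (f^{⋆,⋆}, g^{⋆,⋆}) is an ε-interleaving pair between M^⋆ and N^⋆. In particular, f^{⋆,⋆} and g^{⋆,⋆} have 2ε-trivial kernel and cokernel. -/

import Mathlib

open scoped DirectSum ENNReal

namespace PersStab

/-- A persistence module indexed by a preordered set `P`, with values in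
`K`-vector spaces. -/
structure PersMod (K : Type) [Field K] (P : Type) [Preorder P] where
  V : P → Type
  [acg : ∀ a, AddCommGroup (V a)]
  [mod : ∀ a, Module K (V a)]
  map : ∀ {a b : P}, a ≤ b → (V a →ₗ[K] V b)
  map_id : ∀ a : P, map (le_refl a) = LinearMap.id
  map_comp : ∀ {a b c : P} (h₁ : a ≤ b) (h₂ : b ≤ c),
    map (h₁.trans h₂) = (map h₂).comp (map h₁)

attribute [instance] PersMod.acg PersMod.mod

variable {K : Type} [Field K] {P : Type} [Preorder P]

/-- Pointwise finite dimensional. -/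
def PersMod.pfd (M : PersMod K P) : Prop := ∀ a, FiniteDimensional K (M.V a)

/-- A morphism of persistence modules (a natural transformation). -/
structure PersHom (M N : PersMod K P) where
  app : ∀ a, M.V a →ₗ[K] N.V a
  natural : ∀ {a b : P} (h : a ≤ b), (app b).comp (M.map h) = (N.map h).comp (app a)

/-- An isomorphism of persistence modules. -/
structure PersIso (M N : PersMod K P) where
  e : ∀ a, M.V a ≃ₗ[K] N.V a
  natural : ∀ {a b : P} (h : a ≤ b) (m : M.V a), e b (M.map h m) = N.map h (e a m)

/-- Convexity: the second defining property of an interval in a poset. -/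
def IsConvexIn (J : Set P) : Prop :=
  ∀ ⦃a b c : P⦄, a ∈ J → c ∈ J → a ≤ b → b ≤ c → b ∈ J

/-- Connectivity: the third defining property of an interval in a poset:
any two points are joined by a finite zigzag of comparable points inside `J`. -/
def IsConnectedIn (J : Set P) : Prop :=
  ∀ a ∈ J, ∀ c ∈ J, ∃ (n : ℕ) (f : Fin (n + 1) → P),
    f 0 = a ∧ f (Fin.last n) = c ∧ (∀ k, f k ∈ J) ∧
    ∀ k : Fin n, f k.castSucc ≤ f k.succ ∨ f k.succ ≤ f k.castSucc

/-- An interval in a poset: nonempty, convex and connected. -/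
structure IsInterval (J : Set P) : Prop where
  nonempty : J.Nonempty
  convex : IsConvexIn J
  connected : IsConnectedIn J

-- The structure map of an interval module: the identity `K → K` if the source
-- lies in the interval, and `0` otherwise.
open Classical in
noncomputable def ivMap (K : Type) [Field K] (J : Set P) (a c : P) :
    (PLift (a ∈ J) → K) →ₗ[K] (PLift (c ∈ J) → K) where
  toFun v _ := if h : a ∈ J then v ⟨h⟩ else 0
  map_add' u v := by
    funext hc
    by_cases h : a ∈ J <;> simp [h]
  map_smul' r v := by
    funext hc
    by_cases h : a ∈ J <;> simp [h]

/-- The interval module `I^J` of a convex set `J`: one-dimensional (a copy of `K`)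
at points of `J`, zero elsewhere, with identity internal maps inside `J`. -/
noncomputable def intervalModule (K : Type) [Field K] (J : Set P) (hJ : IsConvexIn J) :
    PersMod K P where
  V a := PLift (a ∈ J) → K
  map {a c} _ := ivMap K J a c
  map_id a := by
    refine LinearMap.ext fun v => funext fun hc => ?_
    obtain ⟨hc⟩ := hc
    simp only [ivMap, LinearMap.coe_mk, AddHom.coe_mk, LinearMap.id_coe, id_eq]
    rw [dif_pos hc]
  map_comp {a b c} h₁ h₂ := by
    refine LinearMap.ext fun v => funext fun hc => ?_
    simp only [ivMap, LinearMap.coe_mk, AddHom.coe_mk, LinearMap.coe_comp,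
      Function.comp_apply]
    by_cases ha : a ∈ J
    · have hb : b ∈ J := hJ ha hc.down h₁ h₂
      simp [ha, hb]
    · simp [ha]

/-- A decomposition of the persistence module `M` as a direct sum of interval
modules `I^{B i}`, `i : ι`, where all the sets `B i` satisfy the predicate `pred`.
The multiset `{B i | i : ι}` is the barcode of `M`. -/
structure DecompOver (pred : Set P → Prop) (M : PersMod K P) where
  ι : Type
  B : ι → Set P
  mem : ∀ i, pred (B i)
  equiv : ∀ a : P, M.V a ≃ₗ[K] (Π₀ i : ι, (PLift (a ∈ B i) → K))
  natural : ∀ {a c : P} (h : a ≤ c) (m : M.V a),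
    equiv c (M.map h m) =
      DFinsupp.mapRange.linearMap (fun i => ivMap K (B i) a c) (equiv a m)

/-- A matching between two multisets, presented as indexed families: a bijection
between a subset (the coimage) of the index set `ι` and a subset (the image) of
the index set `κ`. -/
structure Matching (ι κ : Type) : Type where
  R : ι → κ → Prop
  functional : ∀ {i j j'}, R i j → R i j' → j = j'
  injective : ∀ {i i' j}, R i j → R i' j → i = i'

section Shift

variable (sh : ℝ → P → P)

/-- `M` is `δ`-trivial (with respect to the shift `sh`): all internal maps
from `p` to the `δ`-shift of `p` vanish. -/
def ETrivial (M : PersMod K P) (δ : ℝ) : Prop :=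
  ∀ (p : P) (h : p ≤ sh δ p), M.map h = 0

/-- The data `(f, g)` is an `ε`-interleaving between `M` and `N`:
`f : M → N(ε)` and `g : N → M(ε)` are natural, and the two composites agree with
the `2ε`-shift morphisms of `M` and `N`. -/
structure IsInterleaving (ε : ℝ) (M N : PersMod K P)
    (f : ∀ p, M.V p →ₗ[K] N.V (sh ε p)) (g : ∀ p, N.V p →ₗ[K] M.V (sh ε p)) : Prop where
  nat_f : ∀ {p q : P} (h : p ≤ q) (h' : sh ε p ≤ sh ε q),
    (f q).comp (M.map h) = (N.map h').comp (f p)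
  nat_g : ∀ {p q : P} (h : p ≤ q) (h' : sh ε p ≤ sh ε q),
    (g q).comp (N.map h) = (M.map h').comp (g p)
  gf : ∀ (p : P) (h : p ≤ sh ε (sh ε p)), (g (sh ε p)).comp (f p) = M.map h
  fg : ∀ (p : P) (h : p ≤ sh ε (sh ε p)), (f (sh ε p)).comp (g p) = N.map h

/-- `M` and `N` are `ε`-interleaved. -/
def Interleaved (ε : ℝ) (M N : PersMod K P) : Prop :=
  0 ≤ ε ∧ ∃ f g, IsInterleaving sh ε M N f g

/-- The interleaving distance, valued in `ℝ≥0∞`. -/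
noncomputable def dI (M N : PersMod K P) : ℝ≥0∞ :=
  ⨅ ε : {e : ℝ // Interleaved sh e M N}, ENNReal.ofReal ε.1

/-- `σ` is an `ε`-matching between the barcodes `{A i}` and `{C j}`:
every interval of either barcode which is not `2ε`-trivial is matched, and
matched intervals have `ε`-interleaved interval modules. -/
def IsEpsMatching (K : Type) [Field K] (ε : ℝ) {ι κ : Type}
    (A : ι → Set P) (hA : ∀ i, IsConvexIn (A i))
    (C : κ → Set P) (hC : ∀ j, IsConvexIn (C j)) (σ : Matching ι κ) : Prop :=
  (∀ i, ¬ ETrivial sh (intervalModule K (A i) (hA i)) (2 * ε) → ∃ j, σ.R i j) ∧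
  (∀ j, ¬ ETrivial sh (intervalModule K (C j) (hC j)) (2 * ε) → ∃ i, σ.R i j) ∧
  (∀ i j, σ.R i j →
    Interleaved sh ε (intervalModule K (A i) (hA i)) (intervalModule K (C j) (hC j)))

/-- The bottleneck distance between two barcodes, valued in `ℝ≥0∞`. -/
noncomputable def dB (K : Type) [Field K] {ι κ : Type}
    (A : ι → Set P) (hA : ∀ i, IsConvexIn (A i))
    (C : κ → Set P) (hC : ∀ j, IsConvexIn (C j)) : ℝ≥0∞ :=
  ⨅ e : {e : ℝ // 0 ≤ e ∧ ∃ σ : Matching ι κ, IsEpsMatching sh K e A hA C hC σ},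
    ENNReal.ofReal e.1

end Shift

end PersStab
namespace PersStab

/-! ### The poset `ℝᵒᵖ × ℝ` and blocks -/

/-- The poset `ℝᵒᵖ × ℝ`: `(a, b) ≤ (c, d)` iff `c ≤ a` and `b ≤ d`. -/
structure RopR where
  x : ℝ
  y : ℝ

instance : Preorder RopR where
  le p q := q.x ≤ p.x ∧ p.y ≤ q.y
  le_refl p := ⟨le_rfl, le_rfl⟩
  le_trans p q r h₁ h₂ := ⟨h₂.1.trans h₁.1, h₁.2.trans h₂.2⟩

lemma RopR.le_def {p q : RopR} : p ≤ q ↔ q.x ≤ p.x ∧ p.y ≤ q.y := Iff.rfl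

/-- The `ε`-shift on the poset `ℝᵒᵖ × ℝ`: `(a, b) ↦ (a - ε, b + ε)`. -/
def shf (ε : ℝ) (p : RopR) : RopR := ⟨p.x - ε, p.y + ε⟩

/-- The block `(a,b)_BL = {(x,y) ∈ U : a < x, y < b}` (with `a`, `b` finite;
for infinite endpoints this shape is of type co, oc or c). -/
def blkO (a b : ℝ) : Set RopR := {p | p.x ≤ p.y ∧ a < p.x ∧ p.y < b}

/-- The blocks `[a,b)_BL = {(x,y) ∈ U : a ≤ y < b}` (for `s = a` finite) and
`(-∞,b)_BL = {(x,y) ∈ U : y < b}` (for `s = ⊥`). -/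
def blkCO (s : EReal) (b : ℝ) : Set RopR := {p | p.x ≤ p.y ∧ s ≤ (p.y : EReal) ∧ p.y < b}

/-- The blocks `(a,b]_BL = {(x,y) ∈ U : a < x ≤ b}` (for `t = b` finite) and
`(a,∞)_BL = {(x,y) ∈ U : a < x}` (for `t = ⊤`). -/
def blkOC (a : ℝ) (t : EReal) : Set RopR := {p | p.x ≤ p.y ∧ a < p.x ∧ (p.x : EReal) ≤ t}

/-- The closed blocks `{(x,y) ∈ U : x ≤ t, s ≤ y}`: this includes `[a,b]_BL`
(`s = a ≤ t = b` finite), `[b,a]_BL` (`t = a < s = b` finite), `[a,∞)_BL` (`t = ⊤`),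
`(-∞,b]_BL` (`s = ⊥`) and `(-∞,∞)_BL = U`. -/
def blkC (s t : EReal) : Set RopR := {p | p.x ≤ p.y ∧ (p.x : EReal) ≤ t ∧ s ≤ (p.y : EReal)}

/-- The four types of blocks. -/
inductive BlockType : Type
  | o | co | oc | c
deriving DecidableEq

/-- The blocks of each type. -/
def IsBlockOfType : BlockType → Set RopR → Prop
  | .o, J => ∃ a b : ℝ, a < b ∧ J = blkO a b
  | .co, J => ∃ (s : EReal) (b : ℝ), s ≠ ⊤ ∧ s < (b : EReal) ∧ J = blkCO s b
  | .oc, J => ∃ (a : ℝ) (t : EReal), t ≠ ⊥ ∧ (a : EReal) < t ∧ J = blkOC a t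
  | .c, J => ∃ s t : EReal, s ≠ ⊤ ∧ t ≠ ⊥ ∧ J = blkC s t

/-- A block: an interval of `U ⊆ ℝᵒᵖ × ℝ` of one of the five standard shapes. -/
def IsBlock (J : Set RopR) : Prop := ∃ τ, IsBlockOfType τ J

lemma blkO_convex (a b : ℝ) : IsConvexIn (blkO a b) := by
  rintro p q r ⟨hp1, hp2, hp3⟩ ⟨hr1, hr2, hr3⟩ ⟨hpq1, hpq2⟩ ⟨hqr1, hqr2⟩
  exact ⟨by linarith, by linarith, by linarith⟩

lemma blkCO_convex (s : EReal) (b : ℝ) : IsConvexIn (blkCO s b) := by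
  rintro p q r ⟨hp1, hp2, hp3⟩ ⟨hr1, hr2, hr3⟩ ⟨hpq1, hpq2⟩ ⟨hqr1, hqr2⟩
  refine ⟨by linarith, hp2.trans ?_, by linarith⟩
  exact_mod_cast hpq2

lemma blkOC_convex (a : ℝ) (t : EReal) : IsConvexIn (blkOC a t) := by
  rintro p q r ⟨hp1, hp2, hp3⟩ ⟨hr1, hr2, hr3⟩ ⟨hpq1, hpq2⟩ ⟨hqr1, hqr2⟩
  refine ⟨by linarith, by linarith, le_trans ?_ hp3⟩
  exact_mod_cast hpq1

lemma blkC_convex (s t : EReal) : IsConvexIn (blkC s t) := by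
  rintro p q r ⟨hp1, hp2, hp3⟩ ⟨hr1, hr2, hr3⟩ ⟨hpq1, hpq2⟩ ⟨hqr1, hqr2⟩
  refine ⟨by linarith, le_trans ?_ hp2, hp3.trans ?_⟩
  · exact_mod_cast hpq1
  · exact_mod_cast hpq2

lemma IsBlockOfType.convex {τ : BlockType} {J : Set RopR} (h : IsBlockOfType τ J) :
    IsConvexIn J := by
  cases τ with
  | o => obtain ⟨a, b, -, rfl⟩ := h; exact blkO_convex a b
  | co => obtain ⟨s, b, -, -, rfl⟩ := h; exact blkCO_convex s b
  | oc => obtain ⟨a, t, -, -, rfl⟩ := h; exact blkOC_convex a t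
  | c => obtain ⟨s, t, -, -, rfl⟩ := h; exact blkC_convex s t

lemma IsBlock.convex {J : Set RopR} (h : IsBlock J) : IsConvexIn J :=
  h.choose_spec.convex

end PersStab
namespace PersStab

variable {K : Type} [Field K] {P : Type} [Preorder P]

section
variable (sh : ℝ → P → P)

/-- The kernel of a morphism `f : M → N(ε)` is `δ`-trivial. -/
def KerTrivialSh (ε δ : ℝ) (M N : PersMod K P)
    (f : ∀ p, M.V p →ₗ[K] N.V (sh ε p)) : Prop :=
  ∀ (p : P) (h : p ≤ sh δ p) (m : M.V p), f p m = 0 → M.map h m = 0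

/-- The cokernel of a morphism `f : M → N(ε)` is `δ`-trivial. -/
def CokerTrivialSh (ε δ : ℝ) (M N : PersMod K P)
    (f : ∀ p, M.V p →ₗ[K] N.V (sh ε p)) : Prop :=
  ∀ (p : P) (h' : sh ε p ≤ sh ε (sh δ p)) (n : N.V (sh ε p)),
    ∃ m : M.V (sh δ p), f (sh δ p) m = N.map h' n

/-- The kernel of a plain morphism `f : M → N` is `δ`-trivial. -/
def KerTrivial (δ : ℝ) {M N : PersMod K P} (f : PersHom M N) : Prop :=
  ∀ (p : P) (h : p ≤ sh δ p) (m : M.V p), f.app p m = 0 → M.map h m = 0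

/-- The cokernel of a plain morphism `f : M → N` is `δ`-trivial. -/
def CokerTrivial (δ : ℝ) {M N : PersMod K P} (f : PersHom M N) : Prop :=
  ∀ (p : P) (h : p ≤ sh δ p) (n : N.V p),
    ∃ m : M.V (sh δ p), f.app (sh δ p) m = N.map h n

end

end PersStab
namespace PersStab

variable {K : Type} [Field K] {P : Type} [Preorder P]

/-- The direct sum of a finite family of persistence modules indexed by the
four block types. -/
noncomputable def piMod (Mf : BlockType → PersMod K P) : PersMod K P where
  V a := ∀ τ : BlockType, (Mf τ).V a
  map h := LinearMap.pi fun τ => ((Mf τ).map h).comp (LinearMap.proj τ)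
  map_id a := by
    refine LinearMap.ext fun m => funext fun τ => ?_
    simp [(Mf τ).map_id]
  map_comp h₁ h₂ := by
    refine LinearMap.ext fun m => funext fun τ => ?_
    simp [(Mf τ).map_comp h₁ h₂]

/-- The component `h^{⋆,†}` of a (shifted) morphism between direct sums indexed by
block types: precompose with the inclusion of the `⋆`-summand, postcompose with the
projection onto the `†`-summand. -/
noncomputable def comp2 {sh : ℝ → P → P} {ε : ℝ} (Mf Nf : BlockType → PersMod K P)
    (f : ∀ p, (piMod Mf).V p →ₗ[K] (piMod Nf).V (sh ε p)) (τ τ' : BlockType) :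
    ∀ p, (Mf τ).V p →ₗ[K] (Nf τ').V (sh ε p) := fun p =>
  (LinearMap.proj τ').comp ((f p).comp (LinearMap.single K (fun σ => (Mf σ).V p) τ))


lemma shf_mono {ε : ℝ} {p q : RopR} (h : p ≤ q) : shf ε p ≤ shf ε q := by
  obtain ⟨h1, h2⟩ := h
  exact RopR.le_def.mpr ⟨by simp only [shf]; linarith, by simp only [shf]; linarith⟩

lemma block_geom {τ σ : BlockType} (hne : τ ≠ σ) {B C B' : Set RopR}
    (hB : IsBlockOfType τ B) (hC : IsBlockOfType σ C) (hB' : IsBlockOfType τ B')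
    {ε : ℝ} {p : RopR} (h1 : p ∈ B) (h2 : shf ε p ∈ C) (h3 : shf ε (shf ε p) ∈ B') :
    (∃ r, p ≤ r ∧ shf ε r ∈ C ∧ r ∉ B) ∨ (∃ r, shf ε p ≤ r ∧ shf ε r ∈ B' ∧ r ∉ C) := by
  obtain ⟨x, y⟩ := p
  cases τ <;> cases σ <;> simp only [IsBlockOfType] at hB hC hB'
  case o.o => exact absurd rfl hne
  case co.co => exact absurd rfl hne
  case oc.oc => exact absurd rfl hne
  case c.c => exact absurd rfl hne
  case o.co =>
    obtain ⟨a, b, hab, rfl⟩ := hB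
    obtain ⟨S, c, -, -, rfl⟩ := hC
    simp only [blkO, blkCO, Set.mem_setOf_eq, shf] at h1 h2 ⊢
    refine Or.inl ⟨⟨min x a, y⟩, RopR.le_def.mpr ⟨min_le_left x a, le_refl y⟩, ?_, ?_⟩
    · exact ⟨by have := min_le_left x a; dsimp only; linarith [h2.1], h2.2.1, h2.2.2⟩
    · intro hr; dsimp only at hr; linarith [hr.2.1, min_le_right x a]
  case o.oc =>
    obtain ⟨a, b, hab, rfl⟩ := hB
    obtain ⟨aC, T, -, -, rfl⟩ := hC
    simp only [blkO, blkOC, Set.mem_setOf_eq, shf] at h1 h2 ⊢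
    refine Or.inl ⟨⟨x, max y b⟩, RopR.le_def.mpr ⟨le_refl x, le_max_left y b⟩, ?_, ?_⟩
    · exact ⟨by dsimp only; linarith [h2.1, le_max_left y b], h2.2.1, h2.2.2⟩
    · intro hr; dsimp only at hr; linarith [hr.2.2, le_max_right y b]
  case o.c =>
    obtain ⟨a, b, hab, rfl⟩ := hB
    obtain ⟨S, T, -, -, rfl⟩ := hC
    simp only [blkO, blkC, Set.mem_setOf_eq, shf] at h1 h2 ⊢
    refine Or.inl ⟨⟨min x a, y⟩, RopR.le_def.mpr ⟨min_le_left x a, le_refl y⟩, ?_, ?_⟩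
    · refine ⟨by have := min_le_left x a; dsimp only; linarith [h2.1], ?_, h2.2.2⟩
      exact le_trans (EReal.coe_le_coe_iff.mpr (by have := min_le_left x a; linarith)) h2.2.1
    · intro hr; dsimp only at hr; linarith [hr.2.1, min_le_right x a]
  case co.o =>
    obtain ⟨S, b, -, -, rfl⟩ := hB
    obtain ⟨aC, bC, hab, rfl⟩ := hC
    obtain ⟨S', b', -, -, rfl⟩ := hB'
    simp only [blkCO, blkO, Set.mem_setOf_eq, shf] at h2 h3 ⊢
    refine Or.inr ⟨⟨min (x - ε) aC, y + ε⟩,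
      RopR.le_def.mpr ⟨min_le_left _ _, le_refl _⟩, ?_, ?_⟩
    · exact ⟨by have := min_le_left (x - ε) aC; dsimp only; linarith [h3.1], h3.2.1, h3.2.2⟩
    · intro hr; dsimp only at hr; linarith [hr.2.1, min_le_right (x - ε) aC]
  case co.oc =>
    obtain ⟨S, b, -, -, rfl⟩ := hB
    obtain ⟨aC, T, -, -, rfl⟩ := hC
    obtain ⟨S', b', -, -, rfl⟩ := hB'
    simp only [blkCO, blkOC, Set.mem_setOf_eq, shf] at h2 h3 ⊢
    refine Or.inr ⟨⟨min (x - ε) aC, y + ε⟩,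
      RopR.le_def.mpr ⟨min_le_left _ _, le_refl _⟩, ?_, ?_⟩
    · exact ⟨by have := min_le_left (x - ε) aC; dsimp only; linarith [h3.1], h3.2.1, h3.2.2⟩
    · intro hr; dsimp only at hr; linarith [hr.2.1, min_le_right (x - ε) aC]
  case co.c =>
    obtain ⟨S, b, -, -, rfl⟩ := hB
    obtain ⟨SC, TC, -, -, rfl⟩ := hC
    simp only [blkCO, blkC, Set.mem_setOf_eq, shf] at h1 h2 ⊢
    refine Or.inl ⟨⟨x, max y b⟩, RopR.le_def.mpr ⟨le_refl x, le_max_left y b⟩, ?_, ?_⟩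
    · refine ⟨by dsimp only; linarith [h2.1, le_max_left y b], h2.2.1, ?_⟩
      exact le_trans h2.2.2 (EReal.coe_le_coe_iff.mpr (by linarith [le_max_left y b]))
    · intro hr; dsimp only at hr; linarith [hr.2.2, le_max_right y b]
  case oc.o =>
    obtain ⟨a, T, -, -, rfl⟩ := hB
    obtain ⟨aC, bC, hab, rfl⟩ := hC
    obtain ⟨a', T', -, -, rfl⟩ := hB'
    simp only [blkOC, blkO, Set.mem_setOf_eq, shf] at h2 h3 ⊢
    refine Or.inr ⟨⟨x - ε, max (y + ε) bC⟩,
      RopR.le_def.mpr ⟨le_refl _, le_max_left _ _⟩, ?_, ?_⟩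
    · exact ⟨by dsimp only; linarith [h3.1, le_max_left (y + ε) bC], h3.2.1, h3.2.2⟩
    · intro hr; dsimp only at hr; linarith [hr.2.2, le_max_right (y + ε) bC]
  case oc.co =>
    obtain ⟨a, T, -, -, rfl⟩ := hB
    obtain ⟨SC, c, -, -, rfl⟩ := hC
    obtain ⟨a', T', -, -, rfl⟩ := hB'
    simp only [blkOC, blkCO, Set.mem_setOf_eq, shf] at h2 h3 ⊢
    refine Or.inr ⟨⟨x - ε, max (y + ε) c⟩,
      RopR.le_def.mpr ⟨le_refl _, le_max_left _ _⟩, ?_, ?_⟩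
    · exact ⟨by dsimp only; linarith [h3.1, le_max_left (y + ε) c], h3.2.1, h3.2.2⟩
    · intro hr; dsimp only at hr; linarith [hr.2.2, le_max_right (y + ε) c]
  case oc.c =>
    obtain ⟨a, T, -, -, rfl⟩ := hB
    obtain ⟨SC, TC, -, -, rfl⟩ := hC
    simp only [blkOC, blkC, Set.mem_setOf_eq, shf] at h1 h2 ⊢
    refine Or.inl ⟨⟨min x a, y⟩, RopR.le_def.mpr ⟨min_le_left x a, le_refl y⟩, ?_, ?_⟩
    · refine ⟨by have := min_le_left x a; dsimp only; linarith [h2.1], ?_, h2.2.2⟩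
      exact le_trans (EReal.coe_le_coe_iff.mpr (by have := min_le_left x a; linarith)) h2.2.1
    · intro hr; dsimp only at hr; linarith [hr.2.1, min_le_right x a]
  case c.o =>
    obtain ⟨S, T, -, -, rfl⟩ := hB
    obtain ⟨aC, bC, hab, rfl⟩ := hC
    obtain ⟨S', T', -, -, rfl⟩ := hB'
    simp only [blkC, blkO, Set.mem_setOf_eq, shf] at h2 h3 ⊢
    refine Or.inr ⟨⟨min (x - ε) aC, y + ε⟩,
      RopR.le_def.mpr ⟨min_le_left _ _, le_refl _⟩, ?_, ?_⟩
    · refine ⟨by have := min_le_left (x - ε) aC; dsimp only; linarith [h3.1], ?_, h3.2.2⟩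
      exact le_trans (EReal.coe_le_coe_iff.mpr (by have := min_le_left (x - ε) aC; linarith)) h3.2.1
    · intro hr; dsimp only at hr; linarith [hr.2.1, min_le_right (x - ε) aC]
  case c.co =>
    obtain ⟨S, T, -, -, rfl⟩ := hB
    obtain ⟨SC, c, -, -, rfl⟩ := hC
    obtain ⟨S', T', -, -, rfl⟩ := hB'
    simp only [blkC, blkCO, Set.mem_setOf_eq, shf] at h2 h3 ⊢
    refine Or.inr ⟨⟨x - ε, max (y + ε) c⟩,
      RopR.le_def.mpr ⟨le_refl _, le_max_left _ _⟩, ?_, ?_⟩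
    · refine ⟨by dsimp only; linarith [h3.1, le_max_left (y + ε) c], h3.2.1, ?_⟩
      exact le_trans h3.2.2 (EReal.coe_le_coe_iff.mpr (by linarith [le_max_left (y + ε) c]))
    · intro hr; dsimp only at hr; linarith [hr.2.2, le_max_right (y + ε) c]
  case c.oc =>
    obtain ⟨S, T, -, -, rfl⟩ := hB
    obtain ⟨aC, TC, -, -, rfl⟩ := hC
    obtain ⟨S', T', -, -, rfl⟩ := hB'
    simp only [blkC, blkOC, Set.mem_setOf_eq, shf] at h2 h3 ⊢
    refine Or.inr ⟨⟨min (x - ε) aC, y + ε⟩,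
      RopR.le_def.mpr ⟨min_le_left _ _, le_refl _⟩, ?_, ?_⟩
    · refine ⟨by have := min_le_left (x - ε) aC; dsimp only; linarith [h3.1], ?_, h3.2.2⟩
      exact le_trans (EReal.coe_le_coe_iff.mpr (by have := min_le_left (x - ε) aC; linarith)) h3.2.1
    · intro hr; dsimp only at hr; linarith [hr.2.1, min_le_right (x - ε) aC]

lemma comp_zero_of_types {K : Type} [Field K] {τ σ : BlockType} (hne : τ ≠ σ)
    {B C B' : Set RopR}
    (hB : IsBlockOfType τ B) (hC : IsBlockOfType σ C) (hB' : IsBlockOfType τ B')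
    (ε : ℝ)
    (u : ∀ p : RopR, (PLift (p ∈ B) → K) →ₗ[K] (PLift (shf ε p ∈ C) → K))
    (v : ∀ p : RopR, (PLift (p ∈ C) → K) →ₗ[K] (PLift (shf ε p ∈ B') → K))
    (hu : ∀ {p q : RopR}, p ≤ q →
      (u q).comp (ivMap K B p q) = (ivMap K C (shf ε p) (shf ε q)).comp (u p))
    (hv : ∀ {p q : RopR}, p ≤ q →
      (v q).comp (ivMap K C p q) = (ivMap K B' (shf ε p) (shf ε q)).comp (v p))
    (p : RopR) (m : PLift (p ∈ B) → K) : v (shf ε p) (u p m) = 0 := by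
  by_cases h2 : shf ε p ∈ C
  case neg =>
    have h0 : u p m = 0 := funext fun hc => absurd hc.down h2
    rw [h0, map_zero]
  by_cases h1 : p ∈ B
  case neg =>
    have hm : m = 0 := funext fun hb => absurd hb.down h1
    rw [hm, map_zero, map_zero]
  by_cases h3 : shf ε (shf ε p) ∈ B'
  case neg => exact funext fun hb => absurd hb.down h3
  rcases block_geom hne hB hC hB' h1 h2 h3 with ⟨r, hpr, hrC, hrB⟩ | ⟨r, hpr, hrB', hrC⟩
  · have hnat := congrFun (LinearMap.congr_fun (hu hpr) m) ⟨hrC⟩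
    simp only [LinearMap.comp_apply] at hnat
    have hL : ivMap K B p r m = 0 := funext fun hb => absurd hb.down hrB
    rw [hL, map_zero] at hnat
    simp only [ivMap, LinearMap.coe_mk, AddHom.coe_mk, dif_pos h2, Pi.zero_apply] at hnat
    have h0 : u p m = 0 := by
      funext hc
      cases hc
      exact hnat.symm
    rw [h0, map_zero]
  · funext hb
    have hnat := congrFun (LinearMap.congr_fun (hv hpr) (u p m)) ⟨hrB'⟩
    simp only [LinearMap.comp_apply] at hnat
    have hL : ivMap K C (shf ε p) r (u p m) = 0 := funext fun hc => absurd hc.down hrC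
    rw [hL, map_zero] at hnat
    simp only [ivMap, LinearMap.coe_mk, AddHom.coe_mk, dif_pos h3, Pi.zero_apply] at hnat
    cases hb
    exact hnat.symm
open Classical in
/-- The `(i, j)` matrix entry of a (shifted) morphism `u : M → N(ε)` with respect to
interval decompositions of `M` and `N`. -/
noncomputable def entMap {K : Type} [Field K] {ε : ℝ} {pr1 pr2 : Set RopR → Prop}
    {M N : PersMod K RopR} (DM : DecompOver pr1 M) (DN : DecompOver pr2 N)
    (u : ∀ p : RopR, M.V p →ₗ[K] N.V (shf ε p)) (i : DM.ι) (j : DN.ι) (p : RopR) :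
    (PLift (p ∈ DM.B i) → K) →ₗ[K] (PLift (shf ε p ∈ DN.B j) → K) :=
  (DFinsupp.lapply (R := K) (M := fun j => PLift (shf ε p ∈ DN.B j) → K) j) ∘ₗ
    (DN.equiv (shf ε p)).toLinearMap ∘ₗ (u p) ∘ₗ (DM.equiv p).symm.toLinearMap ∘ₗ
    (DFinsupp.lsingle (R := K) (M := fun i => PLift (p ∈ DM.B i) → K) i)

lemma ent_natural {K : Type} [Field K] {ε : ℝ} {pr1 pr2 : Set RopR → Prop}
    {M N : PersMod K RopR} (DM : DecompOver pr1 M) (DN : DecompOver pr2 N)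
    (u : ∀ p : RopR, M.V p →ₗ[K] N.V (shf ε p))
    (hu : ∀ {p q : RopR} (h : p ≤ q),
      (u q).comp (M.map h) = (N.map (shf_mono h)).comp (u p))
    (i : DM.ι) (j : DN.ι) {p q : RopR} (h : p ≤ q) :
    (entMap DM DN u i j q).comp (ivMap K (DM.B i) p q)
      = (ivMap K (DN.B j) (shf ε p) (shf ε q)).comp (entMap DM DN u i j p) := by
  classical
  refine LinearMap.ext fun z => ?_
  simp only [entMap, LinearMap.comp_apply, LinearEquiv.coe_toLinearMap,
    DFinsupp.lsingle_apply, DFinsupp.lapply_apply]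
  have e1 : (DM.equiv q).symm (DFinsupp.single i (ivMap K (DM.B i) p q z))
      = M.map h ((DM.equiv p).symm (DFinsupp.single i z)) := by
    apply (DM.equiv q).injective
    rw [LinearEquiv.apply_symm_apply, DM.natural h, LinearEquiv.apply_symm_apply,
      DFinsupp.mapRange.linearMap_apply, DFinsupp.mapRange_single]
  have e2 := LinearMap.congr_fun (hu h) ((DM.equiv p).symm (DFinsupp.single i z))
  simp only [LinearMap.comp_apply] at e2
  rw [e1, e2, DN.natural (shf_mono h), DFinsupp.mapRange.linearMap_apply,
    DFinsupp.mapRange_apply]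

lemma cross_zero {K : Type} [Field K] {ε : ℝ} {τ σ : BlockType} (hne : τ ≠ σ)
    {M N : PersMod K RopR}
    (DM : DecompOver (IsBlockOfType τ) M) (DN : DecompOver (IsBlockOfType σ) N)
    (u : ∀ p : RopR, M.V p →ₗ[K] N.V (shf ε p))
    (v : ∀ p : RopR, N.V p →ₗ[K] M.V (shf ε p))
    (hu : ∀ {p q : RopR} (h : p ≤ q),
      (u q).comp (M.map h) = (N.map (shf_mono h)).comp (u p))
    (hv : ∀ {p q : RopR} (h : p ≤ q),
      (v q).comp (N.map h) = (M.map (shf_mono h)).comp (v p))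
    (p : RopR) (m : M.V p) : v (shf ε p) (u p m) = 0 := by
  classical
  have key : ∀ (i : DM.ι) (j : DN.ι) (i' : DM.ι) (q : RopR) (z : PLift (q ∈ DM.B i) → K),
      entMap DN DM v j i' (shf ε q) (entMap DM DN u i j q z) = 0 := fun i j i' q z =>
    comp_zero_of_types hne (DM.mem i) (DN.mem j) (DM.mem i') ε
      (entMap DM DN u i j) (entMap DN DM v j i')
      (fun h => ent_natural DM DN u hu i j h) (fun h => ent_natural DN DM v hv j i' h) q z
  have main : ∀ (i : DM.ι) (z : PLift (p ∈ DM.B i) → K),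
      v (shf ε p) (u p ((DM.equiv p).symm (DFinsupp.single i z))) = 0 := by
    intro i z
    set m₀ := (DM.equiv p).symm (DFinsupp.single i z) with hm₀
    apply (DM.equiv (shf ε (shf ε p))).injective
    rw [map_zero]
    set w := DN.equiv (shf ε p) (u p m₀) with hw
    calc (DM.equiv (shf ε (shf ε p))) (v (shf ε p) (u p m₀))
        = (DM.equiv (shf ε (shf ε p)))
            (v (shf ε p) ((DN.equiv (shf ε p)).symm (w.sum DFinsupp.single))) := by
          rw [DFinsupp.sum_single, hw, LinearEquiv.symm_apply_apply]
      _ = w.sum (fun j c => (DM.equiv (shf ε (shf ε p)))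
            (v (shf ε p) ((DN.equiv (shf ε p)).symm (DFinsupp.single j c)))) := by
          simp only [map_dfinsuppSum]
      _ = 0 := by
          rw [DFinsupp.sum]
          refine Finset.sum_eq_zero fun j _ => ?_
          refine DFinsupp.ext fun i' => ?_
          have h1 : w j = entMap DM DN u i j p z := rfl
          have h2 : ((DM.equiv (shf ε (shf ε p)))
              (v (shf ε p) ((DN.equiv (shf ε p)).symm (DFinsupp.single j (w j))))) i'
              = entMap DN DM v j i' (shf ε p) (w j) := rfl
          rw [DFinsupp.zero_apply, h2, h1, key i j i' p z]
  have hΦ : ((v (shf ε p)) ∘ₗ (u p) ∘ₗ (DM.equiv p).symm.toLinearMap)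
      = (0 : _ →ₗ[K] M.V (shf ε (shf ε p))) := by
    refine DFinsupp.lhom_ext' fun i => ?_
    refine LinearMap.ext fun z => ?_
    simpa only [LinearMap.comp_apply, LinearEquiv.coe_toLinearMap, DFinsupp.lsingle_apply,
      LinearMap.zero_apply, LinearMap.zero_comp] using main i z
  have hfin := LinearMap.congr_fun hΦ (DM.equiv p m)
  simpa only [LinearMap.comp_apply, LinearEquiv.coe_toLinearMap, LinearEquiv.symm_apply_apply,
    LinearMap.zero_apply] using hfin
instance : Fintype BlockType := ⟨{.o, .co, .oc, .c}, fun x => by cases x <;> decide⟩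

lemma comp2_natural {K : Type} [Field K] {ε : ℝ} (Mf Nf : BlockType → PersMod K RopR)
    (f : ∀ p, (piMod Mf).V p →ₗ[K] (piMod Nf).V (shf ε p))
    (hf : ∀ {p q : RopR} (h : p ≤ q) (h' : shf ε p ≤ shf ε q),
      (f q).comp ((piMod Mf).map h) = ((piMod Nf).map h').comp (f p))
    (τ τ' : BlockType) {p q : RopR} (h : p ≤ q) :
    (comp2 Mf Nf f τ τ' q).comp ((Mf τ).map h)
      = ((Nf τ').map (shf_mono h)).comp (comp2 Mf Nf f τ τ' p) := by
  refine LinearMap.ext fun m => ?_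
  have hs : (piMod Mf).map h (Pi.single τ m) = Pi.single τ ((Mf τ).map h m) := by
    funext σ
    show (Mf σ).map h (Pi.single (M := fun σ => (Mf σ).V p) τ m σ)
      = Pi.single (M := fun σ => (Mf σ).V q) τ ((Mf τ).map h m) σ
    by_cases hστ : σ = τ
    · subst hστ; rw [Pi.single_eq_same, Pi.single_eq_same]
    · rw [Pi.single_eq_of_ne hστ, Pi.single_eq_of_ne hστ, map_zero]
  have e := LinearMap.congr_fun (hf h (shf_mono h)) (Pi.single τ m)
  change f q ((piMod Mf).map h (Pi.single τ m)) = (piMod Nf).map (shf_mono h) (f p (Pi.single τ m)) at e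
  show (f q (Pi.single τ ((Mf τ).map h m))) τ' = (Nf τ').map (shf_mono h) ((f p (Pi.single τ m)) τ')
  rw [← hs, e]
  rfl

lemma diag_comp {K : Type} [Field K] {ε : ℝ} (Mf Nf : BlockType → PersMod K RopR)
    (DM : ∀ τ, DecompOver (IsBlockOfType τ) (Mf τ))
    (DN : ∀ τ, DecompOver (IsBlockOfType τ) (Nf τ))
    (f : ∀ p, (piMod Mf).V p →ₗ[K] (piMod Nf).V (shf ε p))
    (g : ∀ p, (piMod Nf).V p →ₗ[K] (piMod Mf).V (shf ε p))
    (hfnat : ∀ {p q : RopR} (h : p ≤ q) (h' : shf ε p ≤ shf ε q),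
      (f q).comp ((piMod Mf).map h) = ((piMod Nf).map h').comp (f p))
    (hgnat : ∀ {p q : RopR} (h : p ≤ q) (h' : shf ε p ≤ shf ε q),
      (g q).comp ((piMod Nf).map h) = ((piMod Mf).map h').comp (g p))
    (τ : BlockType) (p : RopR) (h : p ≤ shf ε (shf ε p))
    (hgf : (g (shf ε p)).comp (f p) = (piMod Mf).map h) :
    (comp2 Nf Mf g τ τ (shf ε p)).comp (comp2 Mf Nf f τ τ p) = (Mf τ).map h := by
  refine LinearMap.ext fun m => ?_
  have e := LinearMap.congr_fun hgf (Pi.single τ m)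
  change g (shf ε p) (f p (Pi.single τ m)) = (piMod Mf).map h (Pi.single τ m) at e
  have eτ := congrFun e τ
  have eR : ((piMod Mf).map h (Pi.single τ m)) τ = (Mf τ).map h m := by
    show (Mf τ).map h (Pi.single (M := fun σ => (Mf σ).V p) τ m τ) = _
    rw [Pi.single_eq_same]
  rw [eR] at eτ
  have hdec : f p (Pi.single τ m)
      = ∑ σ : BlockType, Pi.single σ ((f p (Pi.single τ m)) σ) :=
    (Finset.univ_sum_single _).symm
  erw [hdec, map_sum] at eτ
  erw [Finset.sum_apply] at eτ
  have hcross : ∀ σ ∈ Finset.univ, σ ≠ τ →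
      (g (shf ε p)) (Pi.single σ ((f p) (Pi.single τ m) σ)) τ = 0 := by
    intro σ _ hστ
    exact cross_zero (Ne.symm hστ) (DM τ) (DN σ)
      (comp2 Mf Nf f τ σ) (comp2 Nf Mf g σ τ)
      (fun h' => comp2_natural Mf Nf f hfnat τ σ h')
      (fun h' => comp2_natural Nf Mf g hgnat σ τ h') p m
  rw [Finset.sum_eq_single_of_mem τ (Finset.mem_univ τ) hcross] at eτ
  exact eτ

lemma ker_triv_of_interleaving {K : Type} [Field K] {ε : ℝ} {M N : PersMod K RopR}
    {f' : ∀ p, M.V p →ₗ[K] N.V (shf ε p)} {g' : ∀ p, N.V p →ₗ[K] M.V (shf ε p)}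
    (H : IsInterleaving shf ε M N f' g') : KerTrivialSh shf ε (2 * ε) M N f' := by
  intro p h m hm
  obtain ⟨ha, hb⟩ := RopR.le_def.mp h
  simp only [shf] at ha hb
  have h1 : p ≤ shf ε (shf ε p) :=
    RopR.le_def.mpr ⟨by simp only [shf]; linarith, by simp only [shf]; linarith⟩
  have h2 : shf ε (shf ε p) ≤ shf (2 * ε) p :=
    RopR.le_def.mpr ⟨by simp only [shf]; linarith, by simp only [shf]; linarith⟩
  rw [show M.map h = (M.map h2).comp (M.map h1) from M.map_comp h1 h2]
  have e := LinearMap.congr_fun (H.gf p h1) m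
  simp only [LinearMap.comp_apply] at e
  rw [LinearMap.comp_apply, ← e, hm, map_zero, map_zero]

lemma coker_triv_of_interleaving {K : Type} [Field K] {ε : ℝ} {M N : PersMod K RopR}
    {f' : ∀ p, M.V p →ₗ[K] N.V (shf ε p)} {g' : ∀ p, N.V p →ₗ[K] M.V (shf ε p)}
    (H : IsInterleaving shf ε M N f' g') : CokerTrivialSh shf ε (2 * ε) M N f' := by
  intro p h' n
  obtain ⟨ha, hb⟩ := RopR.le_def.mp h'
  simp only [shf] at ha hb
  have e1 : shf ε (shf ε p) ≤ shf (2 * ε) p :=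
    RopR.le_def.mpr ⟨by simp only [shf]; linarith, by simp only [shf]; linarith⟩
  have h2 : shf ε p ≤ shf ε (shf ε (shf ε p)) :=
    RopR.le_def.mpr ⟨by simp only [shf]; linarith, by simp only [shf]; linarith⟩
  refine ⟨M.map e1 (g' (shf ε p) n), ?_⟩
  have hnat := LinearMap.congr_fun (H.nat_f e1 (shf_mono e1)) (g' (shf ε p) n)
  simp only [LinearMap.comp_apply] at hnat
  have e2 := LinearMap.congr_fun (H.fg (shf ε p) h2) n
  simp only [LinearMap.comp_apply] at e2
  rw [hnat, e2, ← LinearMap.comp_apply ((N.map (shf_mono e1))),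
    ← N.map_comp h2 (shf_mono e1)]
/-- If `(f, g)` is an `ε`-interleaving pair between block decomposable modules
`M = M^o ⊕ M^co ⊕ M^oc ⊕ M^c` and `N = N^o ⊕ N^co ⊕ N^oc ⊕ N^c`, then for each
type `⋆`, `(f^{⋆,⋆}, g^{⋆,⋆})` is an `ε`-interleaving pair between `M^⋆` and `N^⋆`;
in particular `f^{⋆,⋆}` and `g^{⋆,⋆}` have `2ε`-trivial kernel and cokernel. -/
theorem interleaving_respects_type_decomposition
    (K : Type) [Field K] (ε : ℝ) (hε : 0 ≤ ε)
    (Mf Nf : BlockType → PersMod K RopR)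
    (hMpfd : ∀ τ, (Mf τ).pfd) (hNpfd : ∀ τ, (Nf τ).pfd)
    (DM : ∀ τ, DecompOver (IsBlockOfType τ) (Mf τ))
    (DN : ∀ τ, DecompOver (IsBlockOfType τ) (Nf τ))
    (f : ∀ p, (piMod Mf).V p →ₗ[K] (piMod Nf).V (shf ε p))
    (g : ∀ p, (piMod Nf).V p →ₗ[K] (piMod Mf).V (shf ε p))
    (hfg : IsInterleaving shf ε (piMod Mf) (piMod Nf) f g) :
    ∀ τ : BlockType,
      IsInterleaving shf ε (Mf τ) (Nf τ) (comp2 Mf Nf f τ τ) (comp2 Nf Mf g τ τ) ∧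
      KerTrivialSh shf ε (2 * ε) (Mf τ) (Nf τ) (comp2 Mf Nf f τ τ) ∧
      CokerTrivialSh shf ε (2 * ε) (Mf τ) (Nf τ) (comp2 Mf Nf f τ τ) ∧
      KerTrivialSh shf ε (2 * ε) (Nf τ) (Mf τ) (comp2 Nf Mf g τ τ) ∧
      CokerTrivialSh shf ε (2 * ε) (Nf τ) (Mf τ) (comp2 Nf Mf g τ τ) := by
  intro τ
  have Hτ : IsInterleaving shf ε (Mf τ) (Nf τ) (comp2 Mf Nf f τ τ) (comp2 Nf Mf g τ τ) := by
    refine ⟨?_, ?_, ?_, ?_⟩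
    · intro p q h h'
      exact comp2_natural Mf Nf f (fun h h' => hfg.nat_f h h') τ τ h
    · intro p q h h'
      exact comp2_natural Nf Mf g (fun h h' => hfg.nat_g h h') τ τ h
    · intro p h
      exact diag_comp Mf Nf DM DN f g (fun h h' => hfg.nat_f h h')
        (fun h h' => hfg.nat_g h h') τ p h (hfg.gf p h)
    · intro p h
      exact diag_comp Nf Mf DN DM g f (fun h h' => hfg.nat_g h h')
        (fun h h' => hfg.nat_f h h') τ p h (hfg.fg p h)
  have Hτ' : IsInterleaving shf ε (Nf τ) (Mf τ) (comp2 Nf Mf g τ τ) (comp2 Mf Nf f τ τ) :=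
    ⟨Hτ.nat_g, Hτ.nat_f, Hτ.fg, Hτ.gf⟩
  exact ⟨Hτ, ker_triv_of_interleaving Hτ, coker_triv_of_interleaving Hτ,
    ker_triv_of_interleaving Hτ', coker_triv_of_interleaving Hτ'⟩

end PersStab
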